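/- Let M ≥ 1, n ≥ 1, k > 0, α_0,...,α_M > 0 with α = Σ_{d=0}^M α_d and c_1 = (1/α)Σ_{d=0}^M d·α_d. Fix a probability vector t = (t_0,...,t_M) on {0,...,M}, and let (n_0,...,n_M) ∼ Multinomial(n, t) with Z = (1/n)Σ_{d=0}^M d·n_d. Define the posterior Bayes action a_X = (α·c_1 + n·Z)/(α + n). Then E_{(n_0,...,n_M)}[Σ_{d=0}^M t_d · k·(d − a_X)²] = k·{ (1 + n/(α+n)²)·Σ_{d=0}^M d²·t_d + (2αn·c_1/(α+n)² − 2α·c_1/(α+n))·Σ_{d=0}^M d·t_d + (n(n−1)/(α+n)² − 2n/(α+n))·(Σ_{d=0}^M d·t_d)² + α²·c_1²/(α+n)² }. -/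
import Mathlib


open Finset

variable {ι : Type*} [Fintype ι] [DecidableEq ι]

lemma ERPprod_pow_single (t : ι → ℝ) (c : ι → ℕ) (d : ι) :
    ∏ i, t i ^ (c + (Pi.single d 1 : ι → ℕ)) i = t d * ∏ i, t i ^ c i := by
  have h : ∀ i, t i ^ (c + (Pi.single d 1 : ι → ℕ)) i
      = t i ^ c i * t i ^ (Pi.single d 1 : ι → ℕ) i := by
    intro i; rw [Pi.add_apply, pow_add]
  rw [Finset.prod_congr rfl fun i _ => h i, Finset.prod_mul_distrib]
  have h2 : ∏ i, t i ^ (Pi.single d 1 : ι → ℕ) i = t d := by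
    rw [Finset.prod_eq_single d]
    · simp
    · intro i _ hi; simp [Pi.single_eq_of_ne hi]
    · simp
  rw [h2]; ring

lemma ERPmult_succ {n : ℕ} (c : ι → ℕ) (hc : ∑ i, c i = n) (d : ι) :
    (c d + 1) * Nat.multinomial Finset.univ (c + (Pi.single d 1 : ι → ℕ))
      = (n + 1) * Nat.multinomial Finset.univ c := by
  have hsum : ∑ i, (c + (Pi.single d 1 : ι → ℕ)) i = n + 1 := by
    simp only [Pi.add_apply, Finset.sum_add_distrib, hc]
    simp
  have hprod : ∏ i, Nat.factorial ((c + (Pi.single d 1 : ι → ℕ)) i)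
      = (c d + 1) * ∏ i, Nat.factorial (c i) := by
    rw [← Finset.mul_prod_erase Finset.univ _ (Finset.mem_univ d),
        ← Finset.mul_prod_erase Finset.univ (fun i => Nat.factorial (c i)) (Finset.mem_univ d)]
    have h3 : ∏ i ∈ Finset.univ.erase d, Nat.factorial ((c + (Pi.single d 1 : ι → ℕ)) i)
        = ∏ i ∈ Finset.univ.erase d, Nat.factorial (c i) := by
      refine Finset.prod_congr rfl fun i hi => ?_
      rw [Pi.add_apply, Pi.single_eq_of_ne (Finset.mem_erase.1 hi).1, add_zero]
    rw [h3, Pi.add_apply, Pi.single_eq_same, Nat.factorial_succ]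
    ring
  have h1 := Nat.multinomial_spec Finset.univ (c + (Pi.single d 1 : ι → ℕ))
  have h2 := Nat.multinomial_spec Finset.univ c
  rw [hsum] at h1
  rw [hc] at h2
  have hpos : 0 < ∏ i, Nat.factorial (c i) := Finset.prod_pos fun i _ => Nat.factorial_pos _
  refine Nat.eq_of_mul_eq_mul_left hpos ?_
  calc (∏ i, Nat.factorial (c i))
        * ((c d + 1) * Nat.multinomial Finset.univ (c + (Pi.single d 1 : ι → ℕ)))
      = ((c d + 1) * ∏ i, Nat.factorial (c i))
        * Nat.multinomial Finset.univ (c + (Pi.single d 1 : ι → ℕ)) := by ring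
    _ = Nat.factorial (n + 1) := by rw [← hprod, h1]
    _ = (n + 1) * Nat.factorial n := Nat.factorial_succ n
    _ = (n + 1) * ((∏ i, Nat.factorial (c i)) * Nat.multinomial Finset.univ c) := by rw [h2]
    _ = (∏ i, Nat.factorial (c i)) * ((n + 1) * Nat.multinomial Finset.univ c) := by ring

lemma ERPshift (t : ι → ℝ) (n : ℕ) (d : ι) (F : (ι → ℕ) → ℝ) :
    ∑ c ∈ Finset.piAntidiag Finset.univ (n + 1),
        ((Nat.multinomial Finset.univ c : ℝ) * ∏ i, t i ^ c i) * ((c d : ℝ) * F c)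
      = (n + 1) * t d * ∑ c ∈ Finset.piAntidiag Finset.univ n,
          ((Nat.multinomial Finset.univ c : ℝ) * ∏ i, t i ^ c i)
            * F (c + (Pi.single d 1 : ι → ℕ)) := by
  have main : ∀ c' : ι → ℕ, ∑ i, c' i = n →
      ((Nat.multinomial Finset.univ (c' + (Pi.single d 1 : ι → ℕ)) : ℝ)
          * ∏ i, t i ^ (c' + (Pi.single d 1 : ι → ℕ)) i)
        * (((c' + (Pi.single d 1 : ι → ℕ)) d : ℝ) * F (c' + (Pi.single d 1 : ι → ℕ)))
      = (n + 1) * t d * (((Nat.multinomial Finset.univ c' : ℝ) * ∏ i, t i ^ c' i)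
          * F (c' + (Pi.single d 1 : ι → ℕ))) := by
    intro c' hsumc'
    have hmult := ERPmult_succ c' hsumc' d
    have hmultR : ((c' d : ℝ) + 1)
          * (Nat.multinomial Finset.univ (c' + (Pi.single d 1 : ι → ℕ)) : ℝ)
        = ((n : ℝ) + 1) * (Nat.multinomial Finset.univ c' : ℝ) := by
      exact_mod_cast congrArg (Nat.cast : ℕ → ℝ) hmult
    have hcd : (((c' + (Pi.single d 1 : ι → ℕ)) d : ℕ) : ℝ) = (c' d : ℝ) + 1 := by
      push_cast [Pi.add_apply, Pi.single_eq_same]; ring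
    rw [ERPprod_pow_single, hcd]
    linear_combination (t d * (∏ i, t i ^ c' i) * F (c' + (Pi.single d 1 : ι → ℕ))) * hmultR
  rw [Finset.mul_sum]
  rw [← Finset.sum_filter_of_ne (p := fun c => c d ≠ 0)
    (f := fun c => ((Nat.multinomial Finset.univ c : ℝ) * ∏ i, t i ^ c i) * ((c d : ℝ) * F c))
    (by intro c _ h hc; apply h; simp [hc])]
  refine Finset.sum_bij' (fun c _ => c - (Pi.single d 1 : ι → ℕ))
    (fun c _ => c + (Pi.single d 1 : ι → ℕ)) ?_ ?_ ?_ ?_ ?_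
  · intro c hc
    simp only [Finset.mem_filter, Finset.mem_piAntidiag] at hc
    obtain ⟨⟨hsum, -⟩, hd⟩ := hc
    simp only [Finset.mem_piAntidiag]
    refine ⟨?_, fun i _ => Finset.mem_univ i⟩
    have h1 : Finset.univ.sum (c - (Pi.single d 1 : ι → ℕ)) + ∑ i, (Pi.single d 1 : ι → ℕ) i
        = ∑ i, c i := by
      rw [← Finset.sum_add_distrib]
      refine Finset.sum_congr rfl fun i _ => ?_
      simp only [Pi.sub_apply]
      rcases eq_or_ne i d with rfl | hne
      · simp only [Pi.single_eq_same]
        omega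
      · simp [Pi.single_eq_of_ne hne]
    have h2 : ∑ i, (Pi.single d 1 : ι → ℕ) i = 1 := by simp
    have hsum' : ∑ i, c i = n + 1 := hsum
    omega
  · intro c hc
    simp only [Finset.mem_piAntidiag] at hc
    simp only [Finset.mem_filter, Finset.mem_piAntidiag]
    refine ⟨⟨?_, fun i _ => Finset.mem_univ i⟩, ?_⟩
    · simp only [Pi.add_apply, Finset.sum_add_distrib, hc.1]
      simp
    · simp
  · intro c hc
    simp only [Finset.mem_filter, Finset.mem_piAntidiag] at hc
    funext i
    simp only [Pi.add_apply, Pi.sub_apply]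
    rcases eq_or_ne i d with rfl | hne
    · have := hc.2; simp only [Pi.single_eq_same]; omega
    · simp [Pi.single_eq_of_ne hne]
  · intro c _
    funext i
    simp only [Pi.add_apply, Pi.sub_apply]
    rcases eq_or_ne i d with rfl | hne
    · simp
    · simp [Pi.single_eq_of_ne hne]
  · intro c hc
    simp only [Finset.mem_filter, Finset.mem_piAntidiag] at hc
    obtain ⟨⟨hsum, -⟩, hd⟩ := hc
    have hcc : c = (c - (Pi.single d 1 : ι → ℕ)) + (Pi.single d 1 : ι → ℕ) := by
      funext i
      simp only [Pi.add_apply, Pi.sub_apply]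
      rcases eq_or_ne i d with rfl | hne
      · simp only [Pi.single_eq_same]; omega
      · simp [Pi.single_eq_of_ne hne]
    have hsumc' : ∑ i, (c - (Pi.single d 1 : ι → ℕ)) i = n := by
      have h1 := Finset.sum_congr rfl (fun i (_ : i ∈ (Finset.univ : Finset ι)) =>
        congrFun hcc i)
      simp only [Pi.add_apply, Finset.sum_add_distrib] at h1
      simp only [Finset.sum_pi_single', Finset.mem_univ, if_true] at h1
      omega
    have := main (c - (Pi.single d 1 : ι → ℕ)) hsumc'
    beta_reduce
    rw [← this]
    rw [← hcc]

lemma ERPmom0 (t : ι → ℝ) (htsum : ∑ i, t i = 1) (m : ℕ) :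
    ∑ c ∈ Finset.piAntidiag Finset.univ m,
      (Nat.multinomial Finset.univ c : ℝ) * ∏ i, t i ^ c i = 1 := by
  have h := (Finset.sum_pow_eq_sum_piAntidiag (Finset.univ : Finset ι) t m).symm
  rw [htsum, one_pow] at h
  exact h

lemma ERPmom1 (t : ι → ℝ) (htsum : ∑ i, t i = 1) (d : ι) (m : ℕ) :
    ∑ c ∈ Finset.piAntidiag Finset.univ m,
      ((Nat.multinomial Finset.univ c : ℝ) * ∏ i, t i ^ c i) * (c d : ℝ)
      = m * t d := by
  cases m with
  | zero =>
    rw [Finset.piAntidiag_zero, Finset.sum_singleton]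
    simp
  | succ n =>
    have h := ERPshift t n d (fun _ => 1)
    simp only [mul_one] at h
    rw [h, ERPmom0 t htsum]
    push_cast; ring

lemma ERPmom2 (t : ι → ℝ) (htsum : ∑ i, t i = 1) (d e : ι) (m : ℕ) :
    ∑ c ∈ Finset.piAntidiag Finset.univ m,
      ((Nat.multinomial Finset.univ c : ℝ) * ∏ i, t i ^ c i) * ((c d : ℝ) * (c e : ℝ))
      = m * (m - 1) * t d * t e + (if d = e then (m : ℝ) * t d else 0) := by
  cases m with
  | zero =>
    rw [Finset.piAntidiag_zero, Finset.sum_singleton]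
    simp
  | succ n =>
    have h := ERPshift t n d (fun c => (c e : ℝ))
    rw [h]
    have hsplit : ∑ c ∈ Finset.piAntidiag Finset.univ n,
        ((Nat.multinomial Finset.univ c : ℝ) * ∏ i, t i ^ c i)
          * (((c + (Pi.single d 1 : ι → ℕ)) e : ℕ) : ℝ)
        = (n : ℝ) * t e + (if d = e then 1 else 0) := by
      have hterm : ∀ c : ι → ℕ,
          ((Nat.multinomial Finset.univ c : ℝ) * ∏ i, t i ^ c i)
            * (((c + (Pi.single d 1 : ι → ℕ)) e : ℕ) : ℝ)
          = ((Nat.multinomial Finset.univ c : ℝ) * ∏ i, t i ^ c i) * (c e : ℝ)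
            + (if d = e then 1 else 0)
              * ((Nat.multinomial Finset.univ c : ℝ) * ∏ i, t i ^ c i) := by
        intro c
        have : (((c + (Pi.single d 1 : ι → ℕ)) e : ℕ) : ℝ)
            = (c e : ℝ) + (if d = e then 1 else 0) := by
          rcases eq_or_ne d e with rfl | hne
          · simp [Pi.add_apply]
          · simp [Pi.add_apply, Pi.single_eq_of_ne (Ne.symm hne), hne]
        rw [this]; ring
      rw [Finset.sum_congr rfl fun c _ => hterm c, Finset.sum_add_distrib,
        ← Finset.mul_sum, ERPmom1 t htsum e n, ERPmom0 t htsum]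
      ring
    rw [hsplit]
    rcases eq_or_ne d e with rfl | hne
    · simp only [if_pos rfl]
      push_cast; ring
    · simp only [if_neg hne]
      push_cast; ring

lemma ERPE1 (t v : ι → ℝ) (htsum : ∑ i, t i = 1) (m : ℕ) :
    ∑ c ∈ Finset.piAntidiag Finset.univ m,
      ((Nat.multinomial Finset.univ c : ℝ) * ∏ i, t i ^ c i) * (∑ d, v d * (c d : ℝ))
      = m * ∑ d, v d * t d := by
  calc ∑ c ∈ Finset.piAntidiag Finset.univ m,
        ((Nat.multinomial Finset.univ c : ℝ) * ∏ i, t i ^ c i) * (∑ d, v d * (c d : ℝ))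
      = ∑ c ∈ Finset.piAntidiag Finset.univ m, ∑ d,
          v d * (((Nat.multinomial Finset.univ c : ℝ) * ∏ i, t i ^ c i) * (c d : ℝ)) := by
        refine Finset.sum_congr rfl fun c _ => ?_
        rw [Finset.mul_sum]
        exact Finset.sum_congr rfl fun d _ => by ring
    _ = ∑ d, ∑ c ∈ Finset.piAntidiag Finset.univ m,
          v d * (((Nat.multinomial Finset.univ c : ℝ) * ∏ i, t i ^ c i) * (c d : ℝ)) :=
        Finset.sum_comm
    _ = ∑ d, v d * ((m : ℝ) * t d) := by
        refine Finset.sum_congr rfl fun d _ => ?_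
        rw [← Finset.mul_sum, ERPmom1 t htsum d m]
    _ = m * ∑ d, v d * t d := by
        rw [Finset.mul_sum]
        exact Finset.sum_congr rfl fun d _ => by ring

lemma ERPE2 (t v : ι → ℝ) (htsum : ∑ i, t i = 1) (m : ℕ) :
    ∑ c ∈ Finset.piAntidiag Finset.univ m,
      ((Nat.multinomial Finset.univ c : ℝ) * ∏ i, t i ^ c i) * (∑ d, v d * (c d : ℝ)) ^ 2
      = m * (m - 1) * (∑ d, v d * t d) ^ 2 + m * ∑ d, v d ^ 2 * t d := by
  have expand : ∀ c : ι → ℕ, (∑ d, v d * (c d : ℝ)) ^ 2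
      = ∑ d, ∑ e, (v d * v e) * ((c d : ℝ) * (c e : ℝ)) := by
    intro c
    rw [sq, Finset.sum_mul_sum]
    exact Finset.sum_congr rfl fun d _ => Finset.sum_congr rfl fun e _ => by ring
  calc ∑ c ∈ Finset.piAntidiag Finset.univ m,
        ((Nat.multinomial Finset.univ c : ℝ) * ∏ i, t i ^ c i) * (∑ d, v d * (c d : ℝ)) ^ 2
      = ∑ c ∈ Finset.piAntidiag Finset.univ m, ∑ d, ∑ e,
          (v d * v e) * (((Nat.multinomial Finset.univ c : ℝ) * ∏ i, t i ^ c i)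
            * ((c d : ℝ) * (c e : ℝ))) := by
        refine Finset.sum_congr rfl fun c _ => ?_
        rw [expand, Finset.mul_sum]
        refine Finset.sum_congr rfl fun d _ => ?_
        rw [Finset.mul_sum]
        exact Finset.sum_congr rfl fun e _ => by ring
    _ = ∑ d, ∑ e, (v d * v e) * (∑ c ∈ Finset.piAntidiag Finset.univ m,
          ((Nat.multinomial Finset.univ c : ℝ) * ∏ i, t i ^ c i) * ((c d : ℝ) * (c e : ℝ))) := by
        rw [Finset.sum_comm]
        refine Finset.sum_congr rfl fun d _ => ?_
        rw [Finset.sum_comm]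
        exact Finset.sum_congr rfl fun e _ => (Finset.mul_sum _ _ _).symm
    _ = ∑ d, ∑ e, (v d * v e) * ((m : ℝ) * ((m : ℝ) - 1) * t d * t e
          + if d = e then (m : ℝ) * t d else 0) := by
        exact Finset.sum_congr rfl fun d _ => Finset.sum_congr rfl fun e _ => by
          rw [ERPmom2 t htsum d e m]
    _ = m * (m - 1) * (∑ d, v d * t d) ^ 2 + m * ∑ d, v d ^ 2 * t d := by
        simp only [mul_add, Finset.sum_add_distrib, mul_ite, mul_zero, Finset.sum_ite_eq,
          Finset.mem_univ, if_true]
        have h4 : ∑ d, ∑ e, v d * v e * ((m : ℝ) * ((m : ℝ) - 1) * t d * t e)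
            = (m : ℝ) * ((m : ℝ) - 1) * ((∑ d, v d * t d) * (∑ e, v e * t e)) := by
          rw [Finset.sum_mul_sum, Finset.mul_sum]
          refine Finset.sum_congr rfl fun d _ => ?_
          rw [Finset.mul_sum]
          exact Finset.sum_congr rfl fun e _ => by ring
        have h5 : ∑ d, v d * v d * ((m : ℝ) * t d) = (m : ℝ) * ∑ d, v d ^ 2 * t d := by
          rw [Finset.mul_sum]
          exact Finset.sum_congr rfl fun d _ => by ring
        rw [h4, h5, sq]


/-- expected posterior-action risk, conditional on `t`: for a fixed
probability vector `t` on `{0,…,M}` and `(n₀,…,n_M) ∼ Multinomial(n, t)`, with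
`Z = (1/n)∑ d·n_d` and posterior Bayes action `a_X = (α·c₁ + n·Z)/(α+n)`, the
expectation over the counts of the risk `∑ d, t_d·k·(d − a_X)²` equals the stated
closed-form expression. -/
theorem expected_risk_posterior_action_given_t (M n : ℕ) (hM : 1 ≤ M) (hn : 1 ≤ n)
    (k : ℝ) (hk : 0 < k)
    (α : Fin (M + 1) → ℝ) (hα : ∀ d, 0 < α d)
    (A c1 : ℝ) (hA : A = ∑ d, α d)
    (hc1 : c1 = (1 / A) * ∑ d : Fin (M + 1), ((d : ℕ) : ℝ) * α d)
    (t : Fin (M + 1) → ℝ) (ht : ∀ d, 0 ≤ t d) (htsum : ∑ d, t d = 1)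
    (P : (Fin (M + 1) → ℕ) → ℝ)
    (hP : ∀ c, P c = (Nat.multinomial Finset.univ c : ℝ) *
      ∏ d : Fin (M + 1), t d ^ c d)
    (Z : (Fin (M + 1) → ℕ) → ℝ)
    (hZ : ∀ c, Z c = (1 / (n : ℝ)) * ∑ d : Fin (M + 1), ((d : ℕ) : ℝ) * (c d : ℝ))
    (aX : (Fin (M + 1) → ℕ) → ℝ)
    (haX : ∀ c, aX c = (A * c1 + n * Z c) / (A + n)) :
    ∑ c ∈ Finset.Nat.antidiagonalTuple (M + 1) n,
        P c * ∑ d : Fin (M + 1), t d * (k * (((d : ℕ) : ℝ) - aX c) ^ 2)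
      = k * ((1 + (n : ℝ) / (A + n) ^ 2) *
              (∑ d : Fin (M + 1), ((d : ℕ) : ℝ) ^ 2 * t d)
            + (2 * A * n * c1 / (A + n) ^ 2 - 2 * A * c1 / (A + n)) *
              (∑ d : Fin (M + 1), ((d : ℕ) : ℝ) * t d)
            + ((n : ℝ) * ((n : ℝ) - 1) / (A + n) ^ 2 - 2 * n / (A + n)) *
              (∑ d : Fin (M + 1), ((d : ℕ) : ℝ) * t d) ^ 2
            + A ^ 2 * c1 ^ 2 / (A + n) ^ 2) := by
  have hApos : 0 < A := by
    rw [hA]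
    exact Finset.sum_pos (fun d _ => hα d) ⟨0, Finset.mem_univ 0⟩
  have hnpos : (0 : ℝ) < n := by exact_mod_cast hn
  have hnne : (n : ℝ) ≠ 0 := ne_of_gt hnpos
  have hB : A + (n : ℝ) ≠ 0 := ne_of_gt (by linarith)
  set v : Fin (M + 1) → ℝ := fun d => ((d : ℕ) : ℝ) with hv
  set μ1 : ℝ := ∑ d : Fin (M + 1), ((d : ℕ) : ℝ) * t d with hμ1
  set μ2 : ℝ := ∑ d : Fin (M + 1), ((d : ℕ) : ℝ) ^ 2 * t d with hμ2
  set u0 : ℝ := k * μ2 - 2 * k * μ1 * A * c1 / (A + n) + k * A ^ 2 * c1 ^ 2 / (A + n) ^ 2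
    with hu0
  set u1 : ℝ := -2 * k * μ1 / (A + n) + 2 * k * A * c1 / (A + n) ^ 2 with hu1
  set u2 : ℝ := k / (A + n) ^ 2 with hu2
  have hinner : ∀ a : ℝ, ∑ d : Fin (M + 1), t d * (k * (((d : ℕ) : ℝ) - a) ^ 2)
      = k * μ2 - 2 * k * a * μ1 + k * a ^ 2 := by
    intro a
    have : ∀ d : Fin (M + 1), t d * (k * (((d : ℕ) : ℝ) - a) ^ 2)
        = k * (((d : ℕ) : ℝ) ^ 2 * t d) + (-(2 * k * a)) * (((d : ℕ) : ℝ) * t d)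
          + (k * a ^ 2) * t d := by
      intro d; ring
    rw [Finset.sum_congr rfl fun d _ => this d, Finset.sum_add_distrib,
      Finset.sum_add_distrib, ← Finset.mul_sum, ← Finset.mul_sum, ← Finset.mul_sum,
      htsum, ← hμ1, ← hμ2]
    ring
  have key : ∀ c : Fin (M + 1) → ℕ,
      P c * ∑ d : Fin (M + 1), t d * (k * (((d : ℕ) : ℝ) - aX c) ^ 2)
      = u0 * ((Nat.multinomial Finset.univ c : ℝ) * ∏ i, t i ^ c i)
        + u1 * (((Nat.multinomial Finset.univ c : ℝ) * ∏ i, t i ^ c i)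
            * (∑ d, v d * (c d : ℝ)))
        + u2 * (((Nat.multinomial Finset.univ c : ℝ) * ∏ i, t i ^ c i)
            * (∑ d, v d * (c d : ℝ)) ^ 2) := by
    intro c
    have haXc : aX c = (A * c1 + ∑ d, v d * (c d : ℝ)) / (A + n) := by
      rw [haX, hZ]
      rw [show ∑ d : Fin (M + 1), ((d : ℕ) : ℝ) * (c d : ℝ) = ∑ d, v d * (c d : ℝ) from rfl]
      field_simp
    rw [hP, hinner (aX c), haXc, hu0, hu1, hu2]
    field_simp
    ring
  rw [← Finset.piAntidiag_univ_fin_eq_antidiagonalTuple]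
  rw [Finset.sum_congr rfl fun c _ => key c, Finset.sum_add_distrib, Finset.sum_add_distrib,
    ← Finset.mul_sum, ← Finset.mul_sum, ← Finset.mul_sum,
    ERPmom0 t htsum, ERPE1 t v htsum, ERPE2 t v htsum]
  rw [show ∑ d, v d * t d = μ1 from rfl, show ∑ d, v d ^ 2 * t d = μ2 from rfl,
    hu0, hu1, hu2]
  field_simp
  ring
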